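/- Let f : ℝ^{S×A} → ℝ be an admissible reference function with parameters (L, u), let T be the Bellman optimality operator of a finite communicating MDP, and let y : [0,∞) → ℝ^{S×A} solve ẏ = T(y) − r*·e − y and x : [0,∞) → ℝ^{S×A} solve ẋ = T(x) − f(x)·e − x with x(0) = y(0). Then there exists a differentiable function z : [0,∞) → ℝ with z(0) = 0 such that x(t) = y(t) + z(t)·e for all t ≥ 0 and z satisfies the scalar ODE ż(t) = −u·z(t) + (r* − f(y(t))). -/

import Mathlib

open Filter Topology Matrix

/-- A finite Markov decision process with finite state set `S`, finite action set `A`,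
finite reward set `R` (embedded in `ℝ` via `rval`), and transition dynamics `p`. -/
structure MDP (S A R : Type*) [Fintype S] [Fintype A] [Fintype R] where
  /-- `p s a s' r` is the probability of transitioning to `s'` with reward `r`
  when taking action `a` in state `s`. -/
  p : S → A → S → R → ℝ
  /-- The real value of each abstract reward. -/
  rval : R → ℝ
  p_nonneg : ∀ s a s' r, 0 ≤ p s a s' r
  p_sum_one : ∀ s a, ∑ s' : S, ∑ r : R, p s a s' r = 1

variable {S A R : Type*} [Fintype S] [Fintype A] [Fintype R] [DecidableEq S]

/-- A stationary Markov policy: a probability distribution over actions for each state. -/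
def IsPolicy (π : S → A → ℝ) : Prop :=
  (∀ s a, 0 ≤ π s a) ∧ ∀ s, ∑ a : A, π s a = 1

/-- Transition matrix of the Markov chain induced by policy `π`. -/
noncomputable def MDP.Pmat (M : MDP S A R) (π : S → A → ℝ) : Matrix S S ℝ :=
  Matrix.of fun s s' => ∑ a : A, ∑ r : R, π s a * M.p s a s' r

/-- Expected one-step reward under policy `π`. -/
noncomputable def MDP.rPi (M : MDP S A R) (π : S → A → ℝ) : S → ℝ :=
  fun s => ∑ a : A, ∑ s' : S, ∑ r : R, π s a * M.p s a s' r * M.rval r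

/-- The reward rate `r(π, s)`: the Cesàro limit of expected rewards starting from `s`,
where `E[R_t | S_0 = s] = (P_π^(t-1) r_π)(s)`. -/
noncomputable def MDP.rewardRate (M : MDP S A R) (π : S → A → ℝ) (s : S) : ℝ :=
  limUnder atTop (fun n : ℕ =>
    (1 / (n : ℝ)) * ∑ t ∈ Finset.range n, ((M.Pmat π ^ t) *ᵥ M.rPi π) s)

/-- The MDP is communicating: every state is reachable from every other state with
positive probability, in finitely many steps, under some policy. -/
def MDP.Communicating (M : MDP S A R) : Prop :=
  ∀ s s' : S, ∃ π : S → A → ℝ, IsPolicy π ∧ ∃ n : ℕ, 0 < n ∧ 0 < (M.Pmat π ^ n) s s'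

/-- The optimal reward rate `r* = sup_{π, s} r(π, s)`. -/
noncomputable def MDP.rStar (M : MDP S A R) : ℝ :=
  sSup {x : ℝ | ∃ π : S → A → ℝ, ∃ s : S, IsPolicy π ∧ x = M.rewardRate π s}

/-- The Bellman optimality operator `T(Q)(s,a) = Σ_{s',r} p(s',r|s,a) (r + max_{a'} Q(s',a'))`. -/
noncomputable def MDP.T [Nonempty A] (M : MDP S A R) (Q : S × A → ℝ) : S × A → ℝ :=
  fun sa => ∑ s' : S, ∑ r : R, M.p sa.1 sa.2 s' r * (M.rval r + ⨆ a' : A, Q (s', a'))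

/-- `Q` solves the average-reward Bellman optimality equation with offset `rbar`. -/
def MDP.BellmanOpt [Nonempty A] (M : MDP S A R) (Q : S × A → ℝ) (rbar : ℝ) : Prop :=
  ∀ s a, Q (s, a) = ∑ s' : S, ∑ r : R,
    M.p s a s' r * (M.rval r - rbar + ⨆ a' : A, Q (s', a'))

/-- A reference function `f : ℝ^{S×A} → ℝ` admissible with parameters `(L, u)`:
`L`-Lipschitz w.r.t. the sup norm, `f(e) = u`, `f(x + c·e) = f(x) + c·u`, and
`f(c·x) = c·f(x)`. -/
def AdmissibleRef (f : (S × A → ℝ) → ℝ) (L u : ℝ) : Prop :=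
  0 ≤ L ∧ 0 < u ∧ LipschitzWith L.toNNReal f ∧
    f (fun _ => 1) = u ∧
    (∀ (x : S × A → ℝ) (c : ℝ), f (x + fun _ => c) = f x + c * u) ∧
    (∀ (x : S × A → ℝ) (c : ℝ), f (c • x) = c * f x)

section Aux

variable [Nonempty A]

/-- Shift property of the Bellman operator: `T (Q + c·e) = T Q + c·e`. -/
lemma T_shift (M : MDP S A R) (Q : S × A → ℝ) (c : ℝ) :
    M.T (Q + fun _ => c) = M.T Q + fun _ => c := by
  have hQc : (Q + fun _ => c : S × A → ℝ) = fun sa => Q sa + c := by funext sa; simp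
  funext sa
  rw [hQc]
  simp only [MDP.T, Pi.add_apply]
  have hsup : ∀ s' : S, (⨆ a' : A, Q (s', a') + c) = (⨆ a' : A, Q (s', a')) + c := by
    intro s'
    exact (ciSup_add (f := fun a' : A => Q (s', a'))
      (Set.Finite.bddAbove (Set.finite_range _)) c).symm
  have expand : ∀ s' : S, ∀ r : R,
      M.p sa.1 sa.2 s' r * (M.rval r + ⨆ a' : A, Q (s', a') + c)
      = M.p sa.1 sa.2 s' r * (M.rval r + ⨆ a' : A, Q (s', a'))
        + M.p sa.1 sa.2 s' r * c := by
    intro s' r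
    rw [hsup s']
    ring
  simp only [expand, Finset.sum_add_distrib, ← Finset.sum_mul]
  rw [M.p_sum_one sa.1 sa.2, one_mul]

lemma iSup_dist_le (Q Q' : S × A → ℝ) (s' : S) :
    |(⨆ a' : A, Q (s', a')) - ⨆ a' : A, Q' (s', a')| ≤ dist Q Q' := by
  have key : ∀ (P P' : S × A → ℝ),
      (⨆ a' : A, P (s', a')) - (⨆ a' : A, P' (s', a')) ≤ dist P P' := by
    intro P P'
    rw [sub_le_iff_le_add]
    refine ciSup_le fun a' => ?_
    have h1 : P (s', a') - P' (s', a') ≤ dist P P' := by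
      have := dist_le_pi_dist P P' (s', a')
      rw [Real.dist_eq] at this
      exact (le_abs_self _).trans this
    have h2 : P' (s', a') ≤ ⨆ a'' : A, P' (s', a'') :=
      le_ciSup (f := fun a'' : A => P' (s', a''))
        (Set.Finite.bddAbove (Set.finite_range _)) a'
    linarith
  rw [abs_sub_le_iff]
  exact ⟨key Q Q', by simpa [dist_comm] using key Q' Q⟩

lemma T_dist_le (M : MDP S A R) (Q Q' : S × A → ℝ) :
    dist (M.T Q) (M.T Q') ≤ dist Q Q' := by
  refine (dist_pi_le_iff dist_nonneg).2 fun sa => ?_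
  rw [Real.dist_eq]
  simp only [MDP.T]
  have : (∑ s' : S, ∑ r : R, M.p sa.1 sa.2 s' r * (M.rval r + ⨆ a' : A, Q (s', a')))
      - (∑ s' : S, ∑ r : R, M.p sa.1 sa.2 s' r * (M.rval r + ⨆ a' : A, Q' (s', a')))
      = ∑ s' : S, ∑ r : R, M.p sa.1 sa.2 s' r *
          ((⨆ a' : A, Q (s', a')) - ⨆ a' : A, Q' (s', a')) := by
    rw [← Finset.sum_sub_distrib]
    refine Finset.sum_congr rfl fun s' _ => ?_
    rw [← Finset.sum_sub_distrib]
    refine Finset.sum_congr rfl fun r _ => ?_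
    ring
  rw [this]
  calc |∑ s' : S, ∑ r : R, M.p sa.1 sa.2 s' r *
          ((⨆ a' : A, Q (s', a')) - ⨆ a' : A, Q' (s', a'))|
      ≤ ∑ s' : S, |∑ r : R, M.p sa.1 sa.2 s' r *
          ((⨆ a' : A, Q (s', a')) - ⨆ a' : A, Q' (s', a'))| :=
        Finset.abs_sum_le_sum_abs _ _
    _ ≤ ∑ s' : S, ∑ r : R, |M.p sa.1 sa.2 s' r *
          ((⨆ a' : A, Q (s', a')) - ⨆ a' : A, Q' (s', a'))| :=
        Finset.sum_le_sum fun s' _ => Finset.abs_sum_le_sum_abs _ _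
    _ ≤ ∑ s' : S, ∑ r : R, M.p sa.1 sa.2 s' r * dist Q Q' := by
        refine Finset.sum_le_sum fun s' _ => Finset.sum_le_sum fun r _ => ?_
        rw [abs_mul, abs_of_nonneg (M.p_nonneg sa.1 sa.2 s' r)]
        exact mul_le_mul_of_nonneg_left (iSup_dist_le Q Q' s') (M.p_nonneg sa.1 sa.2 s' r)
    _ = dist Q Q' := by
        simp only [← Finset.sum_mul]
        rw [M.p_sum_one sa.1 sa.2, one_mul]

end Aux

/-- If `y` solves `ẏ = T(y) − r*·e − y` and `x` solves
`ẋ = T(x) − f(x)·e − x` with `x 0 = y 0`, then `x t = y t + z t · e` where `z` is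
differentiable, `z 0 = 0`, and `ż = −u·z + (r* − f(y))`. -/
theorem ode_difference_is_constant_vector [Nonempty A]
    (M : MDP S A R) (hcomm : M.Communicating)
    {L u : ℝ} (f : (S × A → ℝ) → ℝ) (hf : AdmissibleRef f L u)
    (y x : ℝ → (S × A → ℝ))
    (hy : ∀ t ∈ Set.Ici (0 : ℝ),
      HasDerivWithinAt y (M.T (y t) - M.rStar • (fun _ => (1 : ℝ)) - y t) (Set.Ici 0) t)
    (hx : ∀ t ∈ Set.Ici (0 : ℝ),
      HasDerivWithinAt x (M.T (x t) - f (x t) • (fun _ => (1 : ℝ)) - x t) (Set.Ici 0) t)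
    (h0 : x 0 = y 0) :
    ∃ z : ℝ → ℝ, z 0 = 0 ∧
      (∀ t ∈ Set.Ici (0 : ℝ), x t = y t + z t • (fun _ => (1 : ℝ))) ∧
      ∀ t ∈ Set.Ici (0 : ℝ),
        HasDerivWithinAt z (-u * z t + (M.rStar - f (y t))) (Set.Ici 0) t := by
  classical
  obtain ⟨hL, hu, hlip, hfe, hshift, hhom⟩ := hf
  set e : S × A → ℝ := fun _ => (1 : ℝ) with he
  -- continuity of y on Ici 0
  have hyc : ContinuousOn y (Set.Ici 0) := fun t ht => (hy t ht).continuousWithinAt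
  -- extend y continuously to all of ℝ
  have hymax : Continuous fun s : ℝ => y (max s 0) := by
    refine hyc.comp_continuous (continuous_id.max continuous_const) fun s => ?_
    exact Set.mem_Ici.2 (le_max_right _ _)
  set g : ℝ → ℝ := fun s => M.rStar - f (y (max s 0)) with hg
  have hgc : Continuous g := continuous_const.sub (hlip.continuous.comp hymax)
  set h : ℝ → ℝ := fun s => Real.exp (u * s) * g s with hh
  have hhc : Continuous h := by
    exact (Real.continuous_exp.comp (continuous_const.mul continuous_id)).mul hgc
  set G : ℝ → ℝ := fun t => ∫ s in (0:ℝ)..t, h s with hG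
  set z : ℝ → ℝ := fun t => Real.exp (-(u * t)) * G t with hz
  have hz0 : z 0 = 0 := by simp [hz, hG]
  -- derivative of z
  have hzderiv : ∀ t : ℝ, HasDerivAt z (-u * z t + g t) t := by
    intro t
    have hGt : HasDerivAt G (h t) t := (hhc.integral_hasStrictDerivAt 0 t).hasDerivAt
    have hexp : HasDerivAt (fun s : ℝ => Real.exp (-(u * s)))
        (Real.exp (-(u * t)) * (-u)) t := by
      have h1 : HasDerivAt (fun s : ℝ => -(u * s)) (-u) t := by
        simpa using ((hasDerivAt_id t).const_mul u).fun_neg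
      simpa using h1.exp
    have := hexp.mul hGt
    refine this.congr_deriv ?_
    have hmul : Real.exp (-(u * t)) * Real.exp (u * t) = 1 := by
      rw [← Real.exp_add]; simp
    have expand : Real.exp (-(u * t)) * (Real.exp (u * t) * g t) = g t := by
      rw [← mul_assoc, hmul, one_mul]
    simp only [hz, hh]
    linear_combination expand
  have hgt : ∀ t ∈ Set.Ici (0 : ℝ), g t = M.rStar - f (y t) := by
    intro t ht
    simp only [hg, max_eq_left (Set.mem_Ici.1 ht)]
  -- candidate solution
  set w : ℝ → (S × A → ℝ) := fun t => y t + z t • e with hw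
  -- key: f and T shift
  have hsmul_e : ∀ c : ℝ, c • e = fun _ : S × A => c := by
    intro c; funext sa; simp [he]
  have hfw : ∀ t, f (w t) = f (y t) + z t * u := by
    intro t
    simp only [hw, hsmul_e]
    exact hshift (y t) (z t)
  -- w solves the x-ODE
  have hwderiv : ∀ t ∈ Set.Ici (0 : ℝ),
      HasDerivWithinAt w (M.T (w t) - f (w t) • e - w t) (Set.Ici 0) t := by
    intro t ht
    have h1 := hy t ht
    have h2 : HasDerivWithinAt (fun s => z s • e)
        ((-u * z t + g t) • e) (Set.Ici 0) t :=
      (hzderiv t).hasDerivWithinAt.smul_const e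
    have h3 := h1.add h2
    refine h3.congr_deriv ?_
    have hTshift : M.T (w t) = M.T (y t) + z t • e := by
      simp only [hw, hsmul_e]
      exact T_shift M (y t) (z t)
    rw [hTshift, hfw t, hgt t ht]
    simp only [hw]
    funext sa
    simp only [Pi.add_apply, Pi.sub_apply, Pi.smul_apply, smul_eq_mul, he]
    ring
  -- uniqueness
  have hK : (0:ℝ) ≤ 2 + L := by linarith
  set K : NNReal := (2 + L).toNNReal with hKdef
  have hvlip : ∀ t : ℝ, LipschitzWith K
      (fun Q : S × A → ℝ => M.T Q - f Q • e - Q) := by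
    intro t
    refine LipschitzWith.of_dist_le_mul fun Q Q' => ?_
    have hK' : (K : ℝ) = 2 + L := Real.coe_toNNReal _ hK
    rw [hK']
    have hT := T_dist_le M Q Q'
    have hfQ : dist (f Q • e) (f Q' • e) ≤ L * dist Q Q' := by
      rw [dist_eq_norm, ← sub_smul]
      calc ‖(f Q - f Q') • e‖ = |f Q - f Q'| * ‖e‖ := by
            rw [norm_smul, Real.norm_eq_abs]
        _ ≤ (L * dist Q Q') * 1 := by
            refine mul_le_mul ?_ ?_ (norm_nonneg _) (by positivity)
            · have := hlip.dist_le_mul Q Q'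
              rw [Real.dist_eq] at this
              rw [Real.coe_toNNReal _ hL] at this
              exact this
            · refine (pi_norm_le_iff_of_nonneg zero_le_one).2 fun sa => ?_
              simp [he]
        _ = L * dist Q Q' := mul_one _
    calc dist (M.T Q - f Q • e - Q) (M.T Q' - f Q' • e - Q')
        ≤ dist (M.T Q - f Q • e) (M.T Q' - f Q' • e) + dist Q Q' := dist_sub_sub_le _ _ _ _
      _ ≤ (dist (M.T Q) (M.T Q') + dist (f Q • e) (f Q' • e)) + dist Q Q' :=
          add_le_add_left (dist_sub_sub_le _ _ _ _) _
      _ ≤ (dist Q Q' + L * dist Q Q') + dist Q Q' := by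
          exact add_le_add_left (add_le_add hT hfQ) _
      _ = (2 + L) * dist Q Q' := by ring
  have hweq : ∀ t ∈ Set.Ici (0 : ℝ), x t = w t := by
    intro b hb
    have hb' : (0:ℝ) ≤ b := hb
    have hxc : ContinuousOn x (Set.Icc 0 b) := fun t ht =>
      ((hx t ht.1).continuousWithinAt).mono Set.Icc_subset_Ici_self
    have hwc : ContinuousOn w (Set.Icc 0 b) := fun t ht =>
      ((hwderiv t ht.1).continuousWithinAt).mono Set.Icc_subset_Ici_self
    have hx' : ∀ t ∈ Set.Ico (0:ℝ) b, HasDerivWithinAt x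
        (M.T (x t) - f (x t) • e - x t) (Set.Ici t) t := fun t ht =>
      (hx t ht.1).mono (Set.Ici_subset_Ici.2 ht.1)
    have hw' : ∀ t ∈ Set.Ico (0:ℝ) b, HasDerivWithinAt w
        (M.T (w t) - f (w t) • e - w t) (Set.Ici t) t := fun t ht =>
      (hwderiv t ht.1).mono (Set.Ici_subset_Ici.2 ht.1)
    have h00 : x 0 = w 0 := by
      simp only [hw, hz0, h0, zero_smul, add_zero]
    have := ODE_solution_unique (v := fun _ Q => M.T Q - f Q • e - Q)
      hvlip hxc hx' hwc hw' h00
    exact this ⟨hb', le_refl b⟩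
  refine ⟨z, hz0, fun t ht => ?_, fun t ht => ?_⟩
  · exact hweq t ht
  · have := (hzderiv t).hasDerivWithinAt (s := Set.Ici 0)
    rw [hgt t ht] at this
    exact this
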